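/- Fix N ≥ 1 and y ∈ W_N^A. The function p_t^N(y|x) = (h_N(y)/h_N(x)) · det_{1≤i,j≤N}[p_t(y_i|x_j)] of (t, x) ∈ (0,∞) × W_N^A satisfies the backward Kolmogorov equation of the Dyson model: ∂p_t^N/∂t = (1/2) ∑_{i=1}^N ∂²p_t^N/∂x_i² + ∑_{1 ≤ i ≠ j ≤ N} (1/(x_i − x_j)) ∂p_t^N/∂x_i. -/

import Mathlib

/-- The one-dimensional Gaussian heat kernel `p_t(b|a)`. -/
noncomputable def heatKer (t b a : ℝ) : ℝ :=
  (1 / Real.sqrt (2 * Real.pi * t)) * Real.exp (-(a - b) ^ 2 / (2 * t))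

lemma hK_a (t b a : ℝ) :
    HasDerivAt (fun a => heatKer t b a) (heatKer t b a * (-(a - b) / t)) a := by
  unfold heatKer
  have h1 : HasDerivAt (fun a : ℝ => -(a - b) ^ 2 / (2 * t))
      (-(a - b) / t * 1) a := by
    have : HasDerivAt (fun a : ℝ => a - b) 1 a := (hasDerivAt_id a).sub_const b
    have h2 := ((this.pow 2).neg).div_const (2 * t)
    refine h2.congr_deriv (Eq.symm ?_)
    by_cases h : t = 0 <;> field_simp <;> ring
  have := (h1.exp).const_mul (1 / Real.sqrt (2 * Real.pi * t))
  refine this.congr_deriv (Eq.symm ?_)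
  ring

lemma hK_a2 (t b a : ℝ) (ht : t ≠ 0) :
    HasDerivAt (fun a => heatKer t b a * (-(a - b) / t))
      (heatKer t b a * (((a - b) ^ 2 / t ^ 2) - 1 / t)) a := by
  have h1 : HasDerivAt (fun a : ℝ => -(a - b) / t) (-1 / t) a := by
    have : HasDerivAt (fun a : ℝ => -(a - b)) (-1) a :=
      ((hasDerivAt_id a).sub_const b).neg
    exact this.div_const t
  have := (hK_a t b a).mul h1
  refine this.congr_deriv (Eq.symm ?_)
  field_simp
  ring

lemma hK_t (t b a : ℝ) (ht : 0 < t) :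
    HasDerivAt (fun t => heatKer t b a)
      ((1 / 2) * (heatKer t b a * (((a - b) ^ 2 / t ^ 2) - 1 / t))) t := by
  unfold heatKer
  have hsq : Real.sqrt (2 * Real.pi * t) ≠ 0 := by
    positivity
  have h2pit : (2 * Real.pi * t) ≠ 0 := by positivity
  have hs : HasDerivAt (fun t : ℝ => Real.sqrt (2 * Real.pi * t))
      (2 * Real.pi / (2 * Real.sqrt (2 * Real.pi * t))) t := by
    have hinner : HasDerivAt (fun t : ℝ => 2 * Real.pi * t) (2 * Real.pi) t := by
      simpa using (hasDerivAt_id t).const_mul (2 * Real.pi)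
    have := (Real.hasDerivAt_sqrt (x := 2 * Real.pi * t) h2pit).comp t hinner
    refine this.congr_deriv (Eq.symm ?_)
    field_simp
  have hinv : HasDerivAt (fun t : ℝ => 1 / Real.sqrt (2 * Real.pi * t))
      (-(2 * Real.pi / (2 * Real.sqrt (2 * Real.pi * t))) / (Real.sqrt (2 * Real.pi * t)) ^ 2) t := by
    simpa using (hasDerivAt_const t (1:ℝ)).fun_div hs hsq
  have hexp : HasDerivAt (fun t : ℝ => Real.exp (-(a - b) ^ 2 / (2 * t)))
      (Real.exp (-(a - b) ^ 2 / (2 * t)) * ((a - b) ^ 2 / (2 * t ^ 2))) t := by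
    have hi : HasDerivAt (fun t : ℝ => -(a - b) ^ 2 / (2 * t))
        ((a - b) ^ 2 / (2 * t ^ 2)) t := by
      have h2t : HasDerivAt (fun t : ℝ => 2 * t) 2 t := by
        simpa using (hasDerivAt_id t).const_mul 2
      have := (hasDerivAt_const t (-(a - b) ^ 2)).div h2t (by positivity)
      refine this.congr_deriv (Eq.symm ?_)
      field_simp
      ring
    simpa [mul_comm] using hi.exp
  have := hinv.mul hexp
  refine this.congr_deriv (Eq.symm ?_)
  have hsqsq : Real.sqrt (2 * Real.pi * t) * Real.sqrt (2 * Real.pi * t) = 2 * Real.pi * t :=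
    Real.mul_self_sqrt (le_of_lt (by positivity))
  generalize hS : Real.sqrt (2 * Real.pi * t) = S at hsq hsqsq ⊢
  have hpi : Real.pi ≠ 0 := Real.pi_ne_zero
  field_simp
  linear_combination (-t) * hsqsq

/-- The product of differences `h_N(x) = ∏_{1 ≤ i < j ≤ N} (x_j − x_i)`. -/
noncomputable def prodDiff (N : ℕ) (x : Fin N → ℝ) : ℝ :=
  ∏ i : Fin N, ∏ j ∈ Finset.Ioi i, (x j - x i)

lemma prodDiff_pos (N : ℕ) (x : Fin N → ℝ) (hx : StrictMono x) : 0 < prodDiff N x := by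
  apply Finset.prod_pos
  intro i _
  apply Finset.prod_pos
  intro j hj
  have : i < j := Finset.mem_Ioi.1 hj
  have := hx this
  linarith

lemma erase_eq_Iio_union_Ioi {N : ℕ} (i : Fin N) :
    Finset.univ.erase i = Finset.Iio i ∪ Finset.Ioi i := by
  ext a
  simp only [Finset.mem_erase, Finset.mem_univ, and_true, Finset.mem_union, Finset.mem_Iio,
    Finset.mem_Ioi]
  exact ne_iff_lt_or_gt

lemma Iio_disjoint_Ioi {N : ℕ} (i : Fin N) :
    Disjoint (Finset.Iio i) (Finset.Ioi i) := by
  rw [Finset.disjoint_left]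
  intro a ha ha'
  exact absurd ((Finset.mem_Iio.1 ha).trans (Finset.mem_Ioi.1 ha')) (lt_irrefl _)

lemma prodDiff_update (N : ℕ) (x : Fin N → ℝ) (i : Fin N) :
    ∃ c : ℝ, ∀ r : ℝ, prodDiff N (Function.update x i r)
      = c * ∏ j ∈ Finset.univ.erase i, (r - x j) := by
  refine ⟨(-1) ^ (Finset.Ioi i).card *
    ∏ a ∈ Finset.univ.erase i, ∏ b ∈ (Finset.Ioi a).erase i, (x b - x a), fun r => ?_⟩
  unfold prodDiff
  rw [← Finset.mul_prod_erase Finset.univ _ (Finset.mem_univ i)]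
  have e1 : ∏ b ∈ Finset.Ioi i, (Function.update x i r b - Function.update x i r i)
      = (-1) ^ (Finset.Ioi i).card * ∏ b ∈ Finset.Ioi i, (r - x b) := by
    rw [← Finset.prod_const, ← Finset.prod_mul_distrib]
    apply Finset.prod_congr rfl
    intro b hb
    have hbi : b ≠ i := (Finset.mem_Ioi.1 hb).ne'
    rw [Function.update_of_ne hbi, Function.update_self]
    ring
  have e2 : ∀ a ∈ Finset.univ.erase i,
      ∏ b ∈ Finset.Ioi a, (Function.update x i r b - Function.update x i r a)
        = (if a < i then (r - x a) else 1) * ∏ b ∈ (Finset.Ioi a).erase i, (x b - x a) := by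
    intro a ha
    have hai : a ≠ i := (Finset.mem_erase.1 ha).1
    have base : ∀ b ∈ (Finset.Ioi a).erase i, Function.update x i r b = x b := fun b hb =>
      Function.update_of_ne (Finset.mem_erase.1 hb).1 _ _
    by_cases hlt : a < i
    · have hmem : i ∈ Finset.Ioi a := Finset.mem_Ioi.2 hlt
      rw [← Finset.mul_prod_erase _ _ hmem, Function.update_self, Function.update_of_ne hai,
        if_pos hlt]
      exact congrArg _ (Finset.prod_congr rfl fun b hb => by rw [base b hb])
    · rw [if_neg hlt, one_mul]
      have hni : i ∉ Finset.Ioi a := by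
        simp only [Finset.mem_Ioi]
        exact hlt
      have hset : (Finset.Ioi a).erase i = Finset.Ioi a := Finset.erase_eq_of_notMem hni
      exact Finset.prod_congr hset.symm fun b hb => by
        rw [base b hb, Function.update_of_ne hai]
  have e3 : (∏ a ∈ Finset.univ.erase i, (if a < i then (r - x a) else 1))
      = ∏ a ∈ Finset.Iio i, (r - x a) := by
    rw [erase_eq_Iio_union_Ioi, Finset.prod_union (Iio_disjoint_Ioi i)]
    rw [Finset.prod_congr rfl (fun a ha => if_pos (Finset.mem_Iio.1 ha)),
      Finset.prod_eq_one (fun a ha => if_neg (asymm (Finset.mem_Ioi.1 ha))), mul_one]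
  rw [Finset.prod_congr rfl e2, Finset.prod_mul_distrib, e3, e1]
  rw [show Finset.univ.erase i = Finset.Iio i ∪ Finset.Ioi i from erase_eq_Iio_union_Ioi i]
  simp only [Finset.prod_union (Iio_disjoint_Ioi i)]
  ring

lemma cyclic_zero (a1 a2 a3 : ℝ) (h12 : a1 ≠ a2) (h13 : a1 ≠ a3) (h23 : a2 ≠ a3) :
    ((a1 - a2) * (a1 - a3))⁻¹ + ((a2 - a3) * (a2 - a1))⁻¹ + ((a3 - a1) * (a3 - a2))⁻¹ = 0 := by
  have h12' : a1 - a2 ≠ 0 := sub_ne_zero.2 h12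
  have h13' : a1 - a3 ≠ 0 := sub_ne_zero.2 h13
  have h23' : a2 - a3 ≠ 0 := sub_ne_zero.2 h23
  have h21' : a2 - a1 ≠ 0 := sub_ne_zero.2 h12.symm
  have h31' : a3 - a1 ≠ 0 := sub_ne_zero.2 h13.symm
  have h32' : a3 - a2 ≠ 0 := sub_ne_zero.2 h23.symm
  field_simp
  ring

lemma triple_sum (N : ℕ) (x : Fin N → ℝ) (hx : Function.Injective x) :
    ∑ i : Fin N, ∑ j ∈ Finset.univ.erase i, ∑ k ∈ (Finset.univ.erase i).erase j,
      ((x i - x j) * (x i - x k))⁻¹ = 0 := by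
  classical
  set g : Fin N → Fin N → Fin N → ℝ := fun i j k =>
    if j ≠ i ∧ k ≠ i ∧ k ≠ j then ((x i - x j) * (x i - x k))⁻¹ else 0 with hg
  have key : ∀ i j k : Fin N, g i j k + g j k i + g k i j = 0 := by
    intro i j k
    rcases eq_or_ne j i with rfl | h1
    · simp [hg]
    rcases eq_or_ne k i with rfl | h2
    · simp [hg]
    rcases eq_or_ne k j with rfl | h3
    · simp [hg]
    rw [hg]
    simp only
    rw [if_pos ⟨h1, h2, h3⟩, if_pos ⟨h3, h1.symm, h2.symm⟩, if_pos ⟨h2.symm, h3.symm, h1⟩]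
    exact cyclic_zero (x i) (x j) (x k) (fun h => h1 (hx h).symm)
      (fun h => h2 (hx h).symm) (fun h => h3 (hx h).symm)
  -- rewrite nested erased sums as full sums
  have step1 : ∀ i : Fin N, ∀ j ∈ Finset.univ.erase i,
      ∑ k ∈ (Finset.univ.erase i).erase j, ((x i - x j) * (x i - x k))⁻¹
        = ∑ k : Fin N, g i j k := by
    intro i j hj
    have hji : j ≠ i := (Finset.mem_erase.1 hj).1
    rw [show (∑ k : Fin N, g i j k)
        = ∑ k ∈ (Finset.univ.erase i).erase j, g i j k from
      (Finset.sum_subset (Finset.subset_univ _) (fun k _ hk => by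
        rw [hg]
        simp only [Finset.mem_erase, Finset.mem_univ, and_true, not_and] at hk
        by_cases hkj : k = j
        · subst hkj
          simp
        · have : k = i := by
            by_contra hki
            exact hkj (by tauto)
          subst this
          simp)).symm]
    exact Finset.sum_congr rfl fun k hk => by
      have h1 : k ≠ j := (Finset.mem_erase.1 hk).1
      have h2 : k ≠ i := (Finset.mem_erase.1 (Finset.mem_erase.1 hk).2).1
      rw [hg]
      simp only
      rw [if_pos ⟨hji, h2, h1⟩]
  have step2 : ∀ i : Fin N,
      ∑ j ∈ Finset.univ.erase i, ∑ k : Fin N, g i j k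
        = ∑ j : Fin N, ∑ k : Fin N, g i j k := by
    intro i
    refine Finset.sum_subset (Finset.subset_univ _) (fun j _ hj => ?_)
    have : j = i := by
      simpa [Finset.mem_erase] using hj
    subst this
    refine Finset.sum_eq_zero fun k _ => by simp [hg]
  rw [Finset.sum_congr rfl (fun i _ => by
    rw [Finset.sum_congr rfl (step1 i), step2 i])]
  -- now a full triple sum; use cyclic symmetry
  have conv : ∀ G : Fin N × Fin N × Fin N → ℝ,
      (∑ p : Fin N × Fin N × Fin N, G p) = ∑ i, ∑ j, ∑ k, G (i, j, k) := by
    intro G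
    rw [Fintype.sum_prod_type]
    exact Finset.sum_congr rfl fun i _ => Fintype.sum_prod_type _
  set G : Fin N × Fin N × Fin N → ℝ := fun p => g p.1 p.2.1 p.2.2 with hG
  set e : (Fin N × Fin N × Fin N) ≃ (Fin N × Fin N × Fin N) :=
    ⟨fun p => (p.2.1, p.2.2, p.1), fun p => (p.2.2, p.1, p.2.1),
      fun ⟨i, j, k⟩ => rfl, fun ⟨i, j, k⟩ => rfl⟩ with he
  have he1 : ∑ p : Fin N × Fin N × Fin N, G (e p) = ∑ p, G p := Equiv.sum_comp e G
  have he2 : ∑ p : Fin N × Fin N × Fin N, G (e (e p)) = ∑ p, G p := by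
    rw [show (fun p => G (e (e p))) = fun p => (fun q => G (e q)) (e p) from rfl]
    rw [Equiv.sum_comp e (fun q => G (e q))]
    exact he1
  have hzero : ∑ p : Fin N × Fin N × Fin N, (G p + G (e p) + G (e (e p))) = 0 := by
    refine Finset.sum_eq_zero fun ⟨i, j, k⟩ _ => ?_
    simp only [hG, he, Equiv.coe_fn_mk]
    exact key i j k
  rw [Finset.sum_add_distrib, Finset.sum_add_distrib, he1, he2] at hzero
  have : ∑ p : Fin N × Fin N × Fin N, G p = 0 := by linarith
  rw [← conv G]
  exact this

noncomputable def epsR {N : ℕ} (σ : Equiv.Perm (Fin N)) : ℝ := ((Equiv.Perm.sign σ : ℤ) : ℝ)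

noncomputable def FF (N : ℕ) (y : Fin N → ℝ) (s : ℝ) (z : Fin N → ℝ) : ℝ :=
  ∑ σ : Equiv.Perm (Fin N), epsR σ * ∏ j, heatKer s (y (σ j)) (z j)

/-- The noncolliding BM transition density
`p_t^N(y|x) = (h_N(y)/h_N(x)) det_{1≤i,j≤N}[p_t(y_i|x_j)]`, as a function of `(t, x)`. -/
noncomputable def noncollidingDensity (N : ℕ) (y : Fin N → ℝ) (t : ℝ) (x : Fin N → ℝ) : ℝ :=
  (prodDiff N y / prodDiff N x) * Matrix.det (Matrix.of fun i j => heatKer t (y i) (x j))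

lemma ncd_FF (N : ℕ) (y : Fin N → ℝ) (s : ℝ) (z : Fin N → ℝ) :
    noncollidingDensity N y s z = prodDiff N y / prodDiff N z * FF N y s z := by
  unfold noncollidingDensity FF epsR
  rw [Matrix.det_apply']
  simp [Matrix.of_apply]

noncomputable def CC (N : ℕ) (y : Fin N → ℝ) (t : ℝ) (x : Fin N → ℝ) (i : Fin N)
    (σ : Equiv.Perm (Fin N)) : ℝ :=
  ∏ j ∈ Finset.univ.erase i, heatKer t (y (σ j)) (x j)

noncomputable def G0 (N : ℕ) (y : Fin N → ℝ) (t : ℝ) (x : Fin N → ℝ) (i : Fin N) (r : ℝ) : ℝ :=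
  ∑ σ : Equiv.Perm (Fin N), epsR σ * (heatKer t (y (σ i)) r * CC N y t x i σ)

noncomputable def G1 (N : ℕ) (y : Fin N → ℝ) (t : ℝ) (x : Fin N → ℝ) (i : Fin N) (r : ℝ) : ℝ :=
  ∑ σ : Equiv.Perm (Fin N),
    epsR σ * (heatKer t (y (σ i)) r * (-(r - y (σ i)) / t) * CC N y t x i σ)

noncomputable def G2 (N : ℕ) (y : Fin N → ℝ) (t : ℝ) (x : Fin N → ℝ) (i : Fin N) (r : ℝ) : ℝ :=
  ∑ σ : Equiv.Perm (Fin N),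
    epsR σ * (heatKer t (y (σ i)) r * ((r - y (σ i)) ^ 2 / t ^ 2 - 1 / t) * CC N y t x i σ)

lemma hG0 (N : ℕ) (y : Fin N → ℝ) (t : ℝ) (x : Fin N → ℝ) (i : Fin N) (r : ℝ) :
    HasDerivAt (G0 N y t x i) (G1 N y t x i r) r :=
  HasDerivAt.fun_sum fun σ _ =>
    (((hK_a t (y (σ i)) r).mul_const (CC N y t x i σ)).const_mul (epsR σ)).congr_deriv
      (by ring)

lemma hG1 (N : ℕ) (y : Fin N → ℝ) (t : ℝ) (x : Fin N → ℝ) (i : Fin N) (r : ℝ) (ht : t ≠ 0) :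
    HasDerivAt (G1 N y t x i) (G2 N y t x i r) r :=
  HasDerivAt.fun_sum fun σ _ =>
    (((hK_a2 t (y (σ i)) r ht).mul_const (CC N y t x i σ)).const_mul (epsR σ)).congr_deriv
      (by ring)

lemma FF_update (N : ℕ) (y : Fin N → ℝ) (t : ℝ) (x : Fin N → ℝ) (i : Fin N) (r : ℝ) :
    FF N y t (Function.update x i r) = G0 N y t x i r := by
  unfold FF G0 CC
  refine Finset.sum_congr rfl fun σ _ => ?_
  congr 1
  rw [← Finset.mul_prod_erase Finset.univ _ (Finset.mem_univ i), Function.update_self]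
  congr 1
  exact Finset.prod_congr rfl fun j hj => by
    rw [Function.update_of_ne (Finset.mem_erase.1 hj).1]

lemma FF_time (N : ℕ) (y : Fin N → ℝ) (t : ℝ) (x : Fin N → ℝ) (ht : 0 < t) :
    HasDerivAt (fun s => FF N y s x) ((1 / 2) * ∑ i : Fin N, G2 N y t x i (x i)) t := by
  have main : ∀ σ : Equiv.Perm (Fin N),
      HasDerivAt (fun s => ∏ j : Fin N, heatKer s (y (σ j)) (x j))
        (∑ j : Fin N, (∏ k ∈ Finset.univ.erase j, heatKer t (y (σ k)) (x k)) •
          ((1 / 2) * (heatKer t (y (σ j)) (x j) *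
            ((x j - y (σ j)) ^ 2 / t ^ 2 - 1 / t)))) t :=
    fun σ => HasDerivAt.fun_finsetProd fun j _ => hK_t t (y (σ j)) (x j) ht
  have := HasDerivAt.fun_sum (u := Finset.univ)
    (fun σ _ => ((main σ).const_mul (epsR σ)))
  refine HasDerivAt.congr_deriv (this) ?_
  unfold G2 CC
  simp only [Finset.mul_sum, smul_eq_mul]
  rw [Finset.sum_comm]
  exact Finset.sum_congr rfl fun j _ => Finset.sum_congr rfl fun σ _ => by ring

noncomputable def QQ (N : ℕ) (x : Fin N → ℝ) (i : Fin N) (r : ℝ) : ℝ :=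
  ∏ j ∈ Finset.univ.erase i, (r - x j)

noncomputable def QQ1 (N : ℕ) (x : Fin N → ℝ) (i : Fin N) (r : ℝ) : ℝ :=
  ∑ j ∈ Finset.univ.erase i, ∏ k ∈ (Finset.univ.erase i).erase j, (r - x k)

noncomputable def QQ2 (N : ℕ) (x : Fin N → ℝ) (i : Fin N) (r : ℝ) : ℝ :=
  ∑ j ∈ Finset.univ.erase i, ∑ k ∈ (Finset.univ.erase i).erase j,
    ∏ l ∈ ((Finset.univ.erase i).erase j).erase k, (r - x l)

lemma hQQ (N : ℕ) (x : Fin N → ℝ) (i : Fin N) (r : ℝ) :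
    HasDerivAt (QQ N x i) (QQ1 N x i r) r := by
  have := HasDerivAt.fun_finsetProd (u := Finset.univ.erase i) (f := fun j r => r - x j)
    (f' := fun _ => (1 : ℝ)) (x := r) (fun j _ => (hasDerivAt_id r).sub_const (x j))
  refine this.congr_deriv ?_
  unfold QQ1
  exact Finset.sum_congr rfl fun j _ => smul_eq_mul .. |>.trans (mul_one _)

lemma hQQ1 (N : ℕ) (x : Fin N → ℝ) (i : Fin N) (r : ℝ) :
    HasDerivAt (QQ1 N x i) (QQ2 N x i r) r := by
  refine HasDerivAt.fun_sum fun j hj => ?_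
  have := HasDerivAt.fun_finsetProd (u := (Finset.univ.erase i).erase j) (f := fun k r => r - x k)
    (f' := fun _ => (1 : ℝ)) (x := r) (fun k _ => (hasDerivAt_id r).sub_const (x k))
  refine this.congr_deriv ?_
  exact Finset.sum_congr rfl fun k _ => smul_eq_mul .. |>.trans (mul_one _)

lemma QQ1_eval (N : ℕ) (x : Fin N → ℝ) (i : Fin N)
    (hne : ∀ j ∈ Finset.univ.erase i, x i - x j ≠ 0) :
    QQ1 N x i (x i) = QQ N x i (x i) * ∑ j ∈ Finset.univ.erase i, (x i - x j)⁻¹ := by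
  unfold QQ1 QQ
  rw [Finset.mul_sum]
  refine Finset.sum_congr rfl fun j hj => ?_
  rw [← Finset.mul_prod_erase _ (fun k => x i - x k) hj]
  field_simp [hne j hj]

lemma QQ2_eval (N : ℕ) (x : Fin N → ℝ) (i : Fin N)
    (hne : ∀ j ∈ Finset.univ.erase i, x i - x j ≠ 0) :
    QQ2 N x i (x i) = QQ N x i (x i) * ∑ j ∈ Finset.univ.erase i,
      ∑ k ∈ (Finset.univ.erase i).erase j, ((x i - x j) * (x i - x k))⁻¹ := by
  unfold QQ2 QQ
  rw [Finset.mul_sum]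
  refine Finset.sum_congr rfl fun j hj => ?_
  rw [Finset.mul_sum]
  refine Finset.sum_congr rfl fun k hk => ?_
  have hk' : k ∈ Finset.univ.erase i := (Finset.mem_erase.1 hk).2
  rw [← Finset.mul_prod_erase _ (fun k => x i - x k) hj,
    ← Finset.mul_prod_erase _ (fun l => x i - x l) hk]
  field_simp [hne j hj, hne k hk']

lemma perI (H A a1 a2 d0 d1 d2 s h : ℝ) (e0 : d0 = h) (e1 : d1 = h * s) (hne : h ≠ 0) :
    (1 / 2) * (((H * a2 * d0 + H * a1 * d1 - (H * a1 * d1 + H * A * d2)) * d0 ^ 2 -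
        (H * a1 * d0 - H * A * d1) * (2 * d0 * d1)) / (d0 ^ 2) ^ 2)
      + s * ((H * a1 * d0 - H * A * d1) / d0 ^ 2)
    = H / (2 * h) * a2 - H * A / (2 * h ^ 2) * d2 := by
  subst e0 e1
  field_simp
  ring

/-- For fixed `N ≥ 1` and `y` in the Weyl chamber `W_N^A`, the function
`p_t^N(y|x)` of `(t,x) ∈ (0,∞) × W_N^A` satisfies the backward Kolmogorov equation of the
Dyson model:
`∂p/∂t = (1/2) ∑_i ∂²p/∂x_i² + ∑_{1 ≤ i ≠ j ≤ N} (1/(x_i − x_j)) ∂p/∂x_i`. -/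
theorem statement_10 (N : ℕ) (hN : 1 ≤ N) (y : Fin N → ℝ) (hy : StrictMono y)
    (t : ℝ) (ht : 0 < t) (x : Fin N → ℝ) (hx : StrictMono x) :
    deriv (fun s : ℝ => noncollidingDensity N y s x) t
      = (1 / 2) * ∑ i : Fin N,
            deriv (deriv (fun r : ℝ => noncollidingDensity N y t (Function.update x i r))) (x i)
        + ∑ i : Fin N, ∑ j ∈ Finset.univ.erase i,
            (1 / (x i - x j))
              * deriv (fun r : ℝ => noncollidingDensity N y t (Function.update x i r)) (x i) := by
  classical
  have hxinj : Function.Injective x := hx.injective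
  have hpos : (0 : ℝ) < prodDiff N x := prodDiff_pos N x hx
  have htne : t ≠ 0 := ne_of_gt ht
  set H := prodDiff N y with hHdef
  set h := prodDiff N x with hhdef
  have hne : h ≠ 0 := ne_of_gt hpos
  choose c hc using fun i => prodDiff_update N x i
  have hsub : ∀ i : Fin N, ∀ j ∈ Finset.univ.erase i, x i - x j ≠ 0 := fun i j hj =>
    sub_ne_zero.2 fun e => (Finset.mem_erase.1 hj).1 (hxinj e.symm)
  have hQne : ∀ i, QQ N x i (x i) ≠ 0 := fun i => by
    unfold QQ
    exact Finset.prod_ne_zero_iff.2 (hsub i)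
  have hcore : ∀ i, c i * QQ N x i (x i) = h := fun i => by
    have h1 := hc i (x i)
    rw [Function.update_eq_self] at h1
    exact h1.symm
  have hcne : ∀ i, c i ≠ 0 := fun i =>
    left_ne_zero_of_mul (a := c i) (b := QQ N x i (x i)) (by rw [hcore i]; exact hne)
  have hA : ∀ i, G0 N y t x i (x i) = FF N y t x := fun i => by
    rw [← FF_update, Function.update_eq_self]
  -- rewrite the density as explicit quotient
  have hgex : ∀ i : Fin N, (fun r : ℝ => noncollidingDensity N y t (Function.update x i r))
      = fun r => H * G0 N y t x i r / (c i * QQ N x i r) := by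
    intro i
    funext r
    rw [ncd_FF, FF_update, hc i r, div_mul_eq_mul_div]
    rfl
  -- first derivative
  have hder1 : ∀ (i : Fin N) (r : ℝ), QQ N x i r ≠ 0 →
      HasDerivAt (fun r => H * G0 N y t x i r / (c i * QQ N x i r))
        ((H * G1 N y t x i r * (c i * QQ N x i r) -
            H * G0 N y t x i r * (c i * QQ1 N x i r)) / (c i * QQ N x i r) ^ 2) r :=
    fun i r hQ =>
      HasDerivAt.div ((hG0 N y t x i r).const_mul H) ((hQQ N x i r).const_mul (c i))
        (mul_ne_zero (hcne i) hQ)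
  have hev : ∀ i : Fin N, ∀ᶠ r in nhds (x i), QQ N x i r ≠ 0 := fun i =>
    (hQQ N x i (x i)).continuousAt.eventually_ne (hQne i)
  have hderiv_ev : ∀ i : Fin N, deriv (fun r => H * G0 N y t x i r / (c i * QQ N x i r))
      =ᶠ[nhds (x i)] fun r => (H * G1 N y t x i r * (c i * QQ N x i r) -
          H * G0 N y t x i r * (c i * QQ1 N x i r)) / (c i * QQ N x i r) ^ 2 :=
    fun i => (hev i).mono fun r hr => (hder1 i r hr).deriv
  -- values of first and second derivatives
  have d1val : ∀ i : Fin N,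
      deriv (fun r : ℝ => noncollidingDensity N y t (Function.update x i r)) (x i)
        = (H * G1 N y t x i (x i) * (c i * QQ N x i (x i)) -
            H * G0 N y t x i (x i) * (c i * QQ1 N x i (x i))) / (c i * QQ N x i (x i)) ^ 2 :=
    fun i => by rw [hgex i]; exact (hder1 i (x i) (hQne i)).deriv
  have d2val : ∀ i : Fin N,
      deriv (deriv (fun r : ℝ => noncollidingDensity N y t (Function.update x i r))) (x i)
        = ((H * G2 N y t x i (x i) * (c i * QQ N x i (x i)) +
              H * G1 N y t x i (x i) * (c i * QQ1 N x i (x i)) -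
              (H * G1 N y t x i (x i) * (c i * QQ1 N x i (x i)) +
                H * G0 N y t x i (x i) * (c i * QQ2 N x i (x i)))) * (c i * QQ N x i (x i)) ^ 2 -
            (H * G1 N y t x i (x i) * (c i * QQ N x i (x i)) -
              H * G0 N y t x i (x i) * (c i * QQ1 N x i (x i))) *
              (2 * (c i * QQ N x i (x i)) * (c i * QQ1 N x i (x i)))) /
          ((c i * QQ N x i (x i)) ^ 2) ^ 2 := by
    intro i
    rw [hgex i, Filter.EventuallyEq.deriv_eq (hderiv_ev i)]
    have num : HasDerivAt (fun r => H * G1 N y t x i r * (c i * QQ N x i r) -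
        H * G0 N y t x i r * (c i * QQ1 N x i r))
        ((H * G2 N y t x i (x i)) * (c i * QQ N x i (x i)) +
            (H * G1 N y t x i (x i)) * (c i * QQ1 N x i (x i)) -
          ((H * G1 N y t x i (x i)) * (c i * QQ1 N x i (x i)) +
            (H * G0 N y t x i (x i)) * (c i * QQ2 N x i (x i)))) (x i) :=
      (((hG1 N y t x i (x i) htne).const_mul H).mul ((hQQ N x i (x i)).const_mul (c i))).sub
        (((hG0 N y t x i (x i)).const_mul H).mul ((hQQ1 N x i (x i)).const_mul (c i)))
    have den : HasDerivAt (fun r => (c i * QQ N x i r) ^ 2)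
        ((2 : ℕ) * (c i * QQ N x i (x i)) ^ (2 - 1) * (c i * QQ1 N x i (x i))) (x i) :=
      ((hQQ N x i (x i)).const_mul (c i)).pow 2
    have dd := num.div den (pow_ne_zero 2 (mul_ne_zero (hcne i) (hQne i)))
    refine (dd.congr_deriv ?_).deriv
    norm_num
  -- the key relations
  have e1 : ∀ i : Fin N, c i * QQ1 N x i (x i)
      = h * ∑ j ∈ Finset.univ.erase i, (1 / (x i - x j)) := fun i => by
    rw [QQ1_eval N x i (hsub i), ← mul_assoc, hcore i]
    simp [one_div]
  have R2 : ∑ i : Fin N, c i * QQ2 N x i (x i) = 0 := by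
    have e2 : ∀ i : Fin N, c i * QQ2 N x i (x i)
        = h * ∑ j ∈ Finset.univ.erase i, ∑ k ∈ (Finset.univ.erase i).erase j,
            ((x i - x j) * (x i - x k))⁻¹ := fun i => by
      rw [QQ2_eval N x i (hsub i), ← mul_assoc, hcore i]
    rw [Finset.sum_congr rfl fun i _ => e2 i, ← Finset.mul_sum, triple_sum N x hxinj, mul_zero]
  -- LHS
  have LHS : deriv (fun s : ℝ => noncollidingDensity N y s x) t
      = H / h * ((1 / 2) * ∑ i : Fin N, G2 N y t x i (x i)) := by
    have hfun : (fun s : ℝ => noncollidingDensity N y s x)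
        = fun s => H / h * FF N y s x := funext fun s => ncd_FF N y s x
    rw [hfun]
    exact ((FF_time N y t x ht).const_mul (H / h)).deriv
  rw [LHS]
  -- RHS: rewrite derivative values and assemble
  have drift : ∀ i : Fin N,
      (∑ j ∈ Finset.univ.erase i, (1 / (x i - x j))
        * deriv (fun r : ℝ => noncollidingDensity N y t (Function.update x i r)) (x i))
      = (∑ j ∈ Finset.univ.erase i, (1 / (x i - x j))) *
          ((H * G1 N y t x i (x i) * (c i * QQ N x i (x i)) -
            H * G0 N y t x i (x i) * (c i * QQ1 N x i (x i))) / (c i * QQ N x i (x i)) ^ 2) :=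
    fun i => by rw [d1val i, ← Finset.sum_mul]
  rw [Finset.sum_congr rfl fun i _ => d2val i, Finset.sum_congr rfl fun i _ => drift i]
  have main_i : ∀ i : Fin N,
      (1 / 2) * (((H * G2 N y t x i (x i) * (c i * QQ N x i (x i)) +
              H * G1 N y t x i (x i) * (c i * QQ1 N x i (x i)) -
              (H * G1 N y t x i (x i) * (c i * QQ1 N x i (x i)) +
                H * G0 N y t x i (x i) * (c i * QQ2 N x i (x i)))) * (c i * QQ N x i (x i)) ^ 2 -
            (H * G1 N y t x i (x i) * (c i * QQ N x i (x i)) -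
              H * G0 N y t x i (x i) * (c i * QQ1 N x i (x i))) *
              (2 * (c i * QQ N x i (x i)) * (c i * QQ1 N x i (x i)))) /
          ((c i * QQ N x i (x i)) ^ 2) ^ 2)
        + (∑ j ∈ Finset.univ.erase i, (1 / (x i - x j))) *
            ((H * G1 N y t x i (x i) * (c i * QQ N x i (x i)) -
              H * G0 N y t x i (x i) * (c i * QQ1 N x i (x i))) / (c i * QQ N x i (x i)) ^ 2)
      = H / (2 * h) * G2 N y t x i (x i)
        - H * FF N y t x / (2 * h ^ 2) * (c i * QQ2 N x i (x i)) := by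
    intro i
    have := perI H (G0 N y t x i (x i)) (G1 N y t x i (x i)) (G2 N y t x i (x i))
      (c i * QQ N x i (x i)) (c i * QQ1 N x i (x i)) (c i * QQ2 N x i (x i))
      (∑ j ∈ Finset.univ.erase i, (1 / (x i - x j))) h (hcore i) (e1 i) hne
    rw [← hA i]
    convert this using 3 <;> ring
  have hsum := Finset.sum_congr rfl fun i (_ : i ∈ Finset.univ) => main_i i
  rw [Finset.sum_add_distrib, Finset.sum_sub_distrib, ← Finset.mul_sum, ← Finset.mul_sum,
    ← Finset.mul_sum, R2, mul_zero, sub_zero] at hsum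
  rw [hsum]
  field_simp
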